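/- For 1 ≤ k ≤ n, the function p R'_{k|n}(p)/R_{k|n}(p) is decreasing in p ∈ (0,1). Equivalently, N(p)/D(p) is decreasing in p ∈ (0,1), where N(p) = ∫₀¹ u^{n-k}((1-u(1-p))/p)^{k-2}((1-u)/p) du and D(p) = ∫₀¹ u^{n-k}((1-u(1-p))/p)^{k-1} du. -/

import Mathlib

set_option maxHeartbeats 1000000

noncomputable def koonB (k n : ℕ) : ℝ :=
  ∫ u in (0:ℝ)..1, u ^ (k - 1) * (1 - u) ^ (n - k)

noncomputable def koonRel (k n : ℕ) (p : ℝ) : ℝ :=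
  (1 / koonB k n) * ∫ u in (0:ℝ)..p, u ^ (k - 1) * (1 - u) ^ (n - k)

noncomputable def koonR (k n : ℕ) (p : ℝ) : ℝ :=
  (1 - p) * (p ^ (k - 1) * (1 - p) ^ (n - k) / koonB k n) / (1 - koonRel k n p)

open Set intervalIntegral MeasureTheory


noncomputable def konD (k n : ℕ) (p : ℝ) : ℝ :=
  ∫ u in (0:ℝ)..1, u ^ (n - k) * ((1 - u * (1 - p)) / p) ^ (k - 1)

noncomputable def konN (k n : ℕ) (p : ℝ) : ℝ :=
  ∫ u in (0:ℝ)..1, u ^ (n - k) * ((1 - u * (1 - p)) / p) ^ (k - 2) * ((1 - u) / p)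

lemma konD_cont (k n : ℕ) (p : ℝ) :
    Continuous (fun u : ℝ => u ^ (n - k) * ((1 - u * (1 - p)) / p) ^ (k - 1)) := by
  exact (continuous_pow _).comp continuous_id |>.mul
    ((((continuous_const.sub (continuous_id.mul continuous_const)).div_const p).pow _))

lemma konN_cont (k n : ℕ) (p : ℝ) :
    Continuous (fun u : ℝ => u ^ (n - k) * ((1 - u * (1 - p)) / p) ^ (k - 2) * ((1 - u) / p)) := by
  exact ((continuous_pow _).mul
    (((continuous_const.sub (continuous_id.mul continuous_const)).div_const p).pow _)).mul
    ((continuous_const.sub continuous_id).div_const p)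

lemma x_pos {p u : ℝ} (hp : p ∈ Ioo (0:ℝ) 1) (hu : u ∈ Icc (0:ℝ) 1) :
    0 < (1 - u * (1 - p)) / p := by
  obtain ⟨hp0, hp1⟩ := hp
  obtain ⟨hu0, hu1⟩ := hu
  apply div_pos _ hp0
  nlinarith

lemma konD_pos {k n : ℕ} (p : ℝ) (hp : p ∈ Ioo (0:ℝ) 1) : 0 < konD k n p := by
  apply intervalIntegral_pos_of_pos_on ((konD_cont k n p).intervalIntegrable 0 1) _ one_pos
  intro u hu
  have hx := x_pos hp ⟨hu.1.le, hu.2.le⟩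
  exact mul_pos (pow_pos hu.1 _) (pow_pos hx _)

lemma konN_nonneg {k n : ℕ} (p : ℝ) (hp : p ∈ Ioo (0:ℝ) 1) : 0 ≤ konN k n p := by
  apply intervalIntegral.integral_nonneg one_pos.le
  intro u hu
  have hx := x_pos hp hu
  have h1 : (0:ℝ) ≤ (1 - u) / p := div_nonneg (by linarith [hu.2]) hp.1.le
  exact mul_nonneg (mul_nonneg (pow_nonneg hu.1 _) (pow_nonneg hx.le _)) h1

lemma konN_le_konD {k n : ℕ} (hk : 2 ≤ k) (p : ℝ) (hp : p ∈ Ioo (0:ℝ) 1) :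
    konN k n p ≤ konD k n p := by
  apply intervalIntegral.integral_mono_on one_pos.le
    ((konN_cont k n p).intervalIntegrable 0 1) ((konD_cont k n p).intervalIntegrable 0 1)
  intro u hu
  have hx := x_pos hp hu
  have hk1 : k - 1 = (k - 2) + 1 := by omega
  rw [hk1, pow_succ, ← mul_assoc]
  apply mul_le_mul_of_nonneg_left _ (mul_nonneg (pow_nonneg hu.1 _) (pow_nonneg hx.le _))
  have hp0 := hp.1
  gcongr
  nlinarith [hu.1, hu.2, hp.2]

lemma konND_antitone (k n : ℕ) (hk : 2 ≤ k) :
    AntitoneOn (fun p => konN k n p / konD k n p) (Ioo (0:ℝ) 1) := by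
  intro p1 hp1 p2 hp2 h12
  simp only
  have hD1 := konD_pos (k := k) (n := n) p1 hp1
  have hD2 := konD_pos (k := k) (n := n) p2 hp2
  have hN1 := konN_nonneg (k := k) (n := n) p1 hp1
  set c : ℝ := konN k n p1 / konD k n p1 with hc
  have hc0 : 0 ≤ c := div_nonneg hN1 hD1.le
  have hc1 : c ≤ 1 := by
    rw [hc, div_le_one hD1]
    exact konN_le_konD hk p1 hp1
  -- φ1 u = (1-u)/(1 - u*(1-p1))
  set φ : ℝ → ℝ := fun u => (1 - u) / (1 - u * (1 - p1)) with hφ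
  have hden1 : ∀ u ∈ Icc (0:ℝ) 1, 0 < 1 - u * (1 - p1) := by
    intro u hu; nlinarith [hu.1, hu.2, hp1.1, hp1.2]
  have hφcont : ContinuousOn φ (Icc 0 1) := by
    apply ContinuousOn.div
    · fun_prop
    · fun_prop
    · intro u hu; exact (hden1 u hu).ne'
  have hIVT := intermediate_value_Icc' (by norm_num : (0:ℝ) ≤ 1) hφcont
  have hφ0 : φ 0 = 1 := by simp [hφ]
  have hφ1 : φ 1 = 0 := by simp [hφ]
  obtain ⟨u0, hu0, hu0c⟩ : ∃ u0 ∈ Icc (0:ℝ) 1, φ u0 = c := by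
    have : c ∈ Icc (φ 1) (φ 0) := by rw [hφ0, hφ1]; exact ⟨hc0, hc1⟩
    obtain ⟨u0, h1, h2⟩ := hIVT this
    exact ⟨u0, h1, h2⟩
  set s : ℝ := ((1 - u0 * (1 - p1)) / p1) ^ (k - 1) with hs
  set r : ℝ := ((1 - u0 * (1 - p2)) / p2) ^ (k - 1) with hr
  have hspos : 0 < s := pow_pos (x_pos hp1 hu0) _
  have hrpos : 0 < r := pow_pos (x_pos hp2 hu0) _
  -- main pointwise inequality, then integrate
  have key : s * konN k n p2 ≤
      s * c * konD k n p2 + r * konN k n p1 - r * c * konD k n p1 := by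
    have hL : s * konN k n p2 = ∫ u in (0:ℝ)..1,
        s * (u ^ (n - k) * ((1 - u * (1 - p2)) / p2) ^ (k - 2) * ((1 - u) / p2)) := by
      rw [konN, ← intervalIntegral.integral_const_mul]
    have hR : s * c * konD k n p2 + r * konN k n p1 - r * c * konD k n p1
        = ∫ u in (0:ℝ)..1,
          (s * c * (u ^ (n - k) * ((1 - u * (1 - p2)) / p2) ^ (k - 1))
          + r * (u ^ (n - k) * ((1 - u * (1 - p1)) / p1) ^ (k - 2) * ((1 - u) / p1))
          - r * c * (u ^ (n - k) * ((1 - u * (1 - p1)) / p1) ^ (k - 1))) := by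
      rw [intervalIntegral.integral_sub, intervalIntegral.integral_add]
      · rw [konN, konD, konD, ← intervalIntegral.integral_const_mul,
          ← intervalIntegral.integral_const_mul, ← intervalIntegral.integral_const_mul]
      · exact (continuous_const.mul (konD_cont k n p2)).intervalIntegrable 0 1
      · exact (continuous_const.mul (konN_cont k n p1)).intervalIntegrable 0 1
      · exact ((continuous_const.mul (konD_cont k n p2)).add
          (continuous_const.mul (konN_cont k n p1))).intervalIntegrable 0 1
      · exact (continuous_const.mul (konD_cont k n p1)).intervalIntegrable 0 1
    rw [hL, hR]
    apply intervalIntegral.integral_mono_on one_pos.le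
    · exact (continuous_const.mul (konN_cont k n p2)).intervalIntegrable 0 1
    · exact (((continuous_const.mul (konD_cont k n p2)).add
        (continuous_const.mul (konN_cont k n p1))).sub
        (continuous_const.mul (konD_cont k n p1))).intervalIntegrable 0 1
    intro u hu
    -- pointwise inequality
    have hy1 : 0 < 1 - u * (1 - p1) := hden1 u hu
    have hy2 : 0 < 1 - u * (1 - p2) := by nlinarith [hu.1, hu.2, hp2.1, hp2.2]
    have hkk : k - 1 = (k - 2) + 1 := by omega
    have hxy2 : ((1 - u * (1 - p2)) / p2) * ((1 - u) / (1 - u * (1 - p2))) = (1 - u) / p2 := by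
      rw [div_mul_div_comm, mul_comm p2 (1 - u * (1 - p2)), mul_div_mul_left _ _ hy2.ne']
    have hxy1 : ((1 - u * (1 - p1)) / p1) * ((1 - u) / (1 - u * (1 - p1))) = (1 - u) / p1 := by
      rw [div_mul_div_comm, mul_comm p1 (1 - u * (1 - p1)), mul_div_mul_left _ _ hy1.ne']
    have e2' : u ^ (n - k) * ((1 - u * (1 - p2)) / p2) ^ (k - 2) * ((1 - u) / p2)
        = u ^ (n - k) * ((1 - u * (1 - p2)) / p2) ^ (k - 1)
          * ((1 - u) / (1 - u * (1 - p2))) := by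
      rw [hkk, pow_succ]
      linear_combination (-(u ^ (n - k) * ((1 - u * (1 - p2)) / p2) ^ (k - 2))) * hxy2
    have e1' : u ^ (n - k) * ((1 - u * (1 - p1)) / p1) ^ (k - 2) * ((1 - u) / p1)
        = u ^ (n - k) * ((1 - u * (1 - p1)) / p1) ^ (k - 1)
          * ((1 - u) / (1 - u * (1 - p1))) := by
      rw [hkk, pow_succ]
      linear_combination (-(u ^ (n - k) * ((1 - u * (1 - p1)) / p1) ^ (k - 2))) * hxy1
    rw [e1', e2']
    set X1 : ℝ := ((1 - u * (1 - p1)) / p1) ^ (k - 1) with hX1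
    set X2 : ℝ := ((1 - u * (1 - p2)) / p2) ^ (k - 1) with hX2
    set A : ℝ := u ^ (n - k) with hA
    set f1 : ℝ := (1 - u) / (1 - u * (1 - p1)) with hf1
    set f2 : ℝ := (1 - u) / (1 - u * (1 - p2)) with hf2
    have hX1pos : 0 < X1 := pow_pos (x_pos hp1 hu) _
    have hX2pos : 0 < X2 := pow_pos (x_pos hp2 hu) _
    have hAnn : 0 ≤ A := pow_nonneg hu.1 _
    have hstep1 : f2 ≤ f1 := by
      rw [hf1, hf2, div_le_div_iff₀ hy2 hy1]
      nlinarith [hu.1, hu.2, mul_nonneg (mul_nonneg hu.1 (sub_nonneg.2 h12)) (sub_nonneg.2 hu.2)]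
    have hstep2 : s * X2 * (f1 - c) ≤ r * X1 * (f1 - c) := by
      have hy10 : 0 < 1 - u0 * (1 - p1) := hden1 u0 hu0
      have hy20 : 0 < 1 - u0 * (1 - p2) := by nlinarith [hu0.1, hu0.2, hp2.1, hp2.2]
      rcases le_total u u0 with h | h
      · have hφm : c ≤ f1 := by
          rw [← hu0c, hφ, hf1, div_le_div_iff₀ hy10 hy1]
          nlinarith [hp1.1]
        have hsX : s * X2 ≤ r * X1 := by
          rw [hs, hr, hX1, hX2, ← mul_pow, ← mul_pow]
          apply pow_le_pow_left₀ (mul_pos (x_pos hp1 hu0) (x_pos hp2 hu)).le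
          rw [div_mul_div_comm, div_mul_div_comm,
            div_le_div_iff₀ (mul_pos hp1.1 hp2.1) (mul_pos hp2.1 hp1.1)]
          nlinarith [mul_nonneg (sub_nonneg.2 h12) (sub_nonneg.2 h),
            mul_pos hp1.1 hp2.1]
        exact mul_le_mul_of_nonneg_right hsX (by linarith)
      · have hφm : f1 ≤ c := by
          rw [← hu0c, hφ, hf1, div_le_div_iff₀ hy1 hy10]
          nlinarith [hp1.1]
        have hsX : r * X1 ≤ s * X2 := by
          rw [hs, hr, hX1, hX2, ← mul_pow, ← mul_pow]
          apply pow_le_pow_left₀ (mul_pos (x_pos hp2 hu0) (x_pos hp1 hu)).le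
          rw [div_mul_div_comm, div_mul_div_comm,
            div_le_div_iff₀ (mul_pos hp2.1 hp1.1) (mul_pos hp1.1 hp2.1)]
          nlinarith [mul_nonneg (sub_nonneg.2 h12) (sub_nonneg.2 h),
            mul_pos hp1.1 hp2.1]
        exact mul_le_mul_of_nonpos_right hsX (by linarith)
    calc s * (A * X2 * f2) ≤ s * (A * X2 * f1) := by
          apply mul_le_mul_of_nonneg_left _ hspos.le
          exact mul_le_mul_of_nonneg_left hstep1 (mul_nonneg hAnn hX2pos.le)
      _ ≤ s * c * (A * X2) + r * (A * X1 * f1) - r * c * (A * X1) := by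
          nlinarith [mul_le_mul_of_nonneg_left hstep2 hAnn]
  have hs' : konN k n p2 ≤ c * konD k n p2 := by
    have h1 : r * konN k n p1 - r * c * konD k n p1 = 0 := by
      rw [hc]; field_simp; ring
    nlinarith [key]
  rw [div_le_div_iff₀ hD2 hD1]
  calc konN k n p2 * konD k n p1 ≤ (c * konD k n p2) * konD k n p1 := by
        exact mul_le_mul_of_nonneg_right hs' hD1.le
    _ = konN k n p1 * konD k n p2 := by rw [hc]; field_simp






noncomputable def konA (k n : ℕ) (p : ℝ) : ℝ :=
  ∫ t in p..(1:ℝ), t ^ (k - 1) * (1 - t) ^ (n - k)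

lemma konA_cont (k n : ℕ) : Continuous (fun t : ℝ => t ^ (k - 1) * (1 - t) ^ (n - k)) := by
  fun_prop


lemma konA_pos {k n : ℕ} {p : ℝ} (hp : p ∈ Ioo (0:ℝ) 1) : 0 < konA k n p := by
  apply intervalIntegral_pos_of_pos_on ((konA_cont k n).intervalIntegrable p 1) _ hp.2
  intro t ht
  have h0 : 0 < t := lt_trans hp.1 ht.1
  exact mul_pos (pow_pos h0 _) (pow_pos (by linarith [ht.2]) _)

lemma koonB_pos {k n : ℕ} : 0 < koonB k n := by
  apply intervalIntegral_pos_of_pos_on ((konA_cont k n).intervalIntegrable 0 1) _ one_pos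
  intro t ht
  exact mul_pos (pow_pos ht.1 _) (pow_pos (by linarith [ht.2]) _)

lemma x_pos' {p u : ℝ} (hp : p ∈ Ioo (0:ℝ) 1) (hu : u ∈ Icc (0:ℝ) 1) :
    0 < (1 - u * (1 - p)) / p := by
  obtain ⟨hp0, hp1⟩ := hp
  obtain ⟨hu0, hu1⟩ := hu
  apply div_pos _ hp0
  nlinarith

-- substitution lemma
lemma konA_eq_konD {k n : ℕ} (hk : 2 ≤ k) {p : ℝ} (hp : p ∈ Ioo (0:ℝ) 1) :
    konA k n p = (1 - p) ^ (n - k + 1) * p ^ (k - 1) * konD k n p := by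
  have hp0 : p ≠ 0 := hp.1.ne'
  have h1 : ∀ x ∈ uIcc (0:ℝ) 1, HasDerivAt (fun u : ℝ => 1 - (1 - p) * u) (-(1 - p)) x := by
    intro x _
    simpa using (((hasDerivAt_id x).const_mul (1 - p)).const_sub 1)
  have h2 := integral_comp_smul_deriv h1 continuousOn_const (konA_cont k n)
  simp only [Function.comp, smul_eq_mul] at h2
  rw [intervalIntegral.integral_const_mul] at h2
  have h3 : (1 - (1 - p) * (0:ℝ)) = 1 := by ring
  have h4 : (1 - (1 - p) * (1:ℝ)) = p := by ring
  rw [h3, h4] at h2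
  have h5 : ∫ x in (1:ℝ)..p, x ^ (k - 1) * (1 - x) ^ (n - k) = - konA k n p := by
    rw [konA, intervalIntegral.integral_symm]
  rw [h5] at h2
  have h6 : konA k n p = (1 - p) * ∫ u in (0:ℝ)..1,
      (1 - (1 - p) * u) ^ (k - 1) * (1 - (1 - (1 - p) * u)) ^ (n - k) := by
    linarith [h2]
  rw [h6]
  have h7 : ∫ u in (0:ℝ)..1, (1 - (1 - p) * u) ^ (k - 1) * (1 - (1 - (1 - p) * u)) ^ (n - k)
      = ∫ u in (0:ℝ)..1, ((1 - p) ^ (n - k) * p ^ (k - 1))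
          * (u ^ (n - k) * ((1 - u * (1 - p)) / p) ^ (k - 1)) := by
    apply intervalIntegral.integral_congr
    intro u _
    simp only
    have e : (1 - (1 - (1 - p) * u)) = (1 - p) * u := by ring
    have e2 : (1 - (1 - p) * u) = (1 - u * (1 - p)) := by ring
    rw [e, e2, mul_pow, div_pow]
    field_simp
  rw [h7, intervalIntegral.integral_const_mul, ← konD, pow_succ]
  ring

-- integration by parts identity
lemma konIBP {k n : ℕ} (hk : 2 ≤ k) (hkn : k ≤ n) {p : ℝ} (hp : p ∈ Ioo (0:ℝ) 1) :
    (((n - k : ℕ) : ℝ) + 1) * konD k n p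
      - ((k - 1 : ℕ) : ℝ) * ((1 - p) / p) * (konD k n p - konN k n p) = 1 := by
  have hp0 : p ≠ 0 := hp.1.ne'
  -- derivative of F u = u^(n-k+1) * ((1-u*(1-p))/p)^(k-1)
  have hF : ∀ u ∈ uIcc (0:ℝ) 1,
      HasDerivAt (fun u : ℝ => u ^ (n - k + 1) * ((1 - u * (1 - p)) / p) ^ (k - 1))
        ((((n - k + 1 : ℕ)) : ℝ) * u ^ (n - k) * ((1 - u * (1 - p)) / p) ^ (k - 1)
          + u ^ (n - k + 1) * (((k - 1 : ℕ) : ℝ) * ((1 - u * (1 - p)) / p) ^ (k - 2)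
            * (-(1 - p) / p))) u := by
    intro u _
    have hin : HasDerivAt (fun u : ℝ => (1 - u * (1 - p)) / p) (-(1 - p) / p) u := by
      have h := (((hasDerivAt_id u).mul_const (1 - p)).const_sub 1).div_const p
      simp only [id_eq] at h
      exact h.congr_deriv (by ring)
    have hpow : HasDerivAt (fun u : ℝ => ((1 - u * (1 - p)) / p) ^ (k - 1))
        (((k - 1 : ℕ) : ℝ) * ((1 - u * (1 - p)) / p) ^ (k - 1 - 1) * (-(1 - p) / p)) u :=
      hin.pow (k - 1)
    have hk2 : k - 1 - 1 = k - 2 := by omega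
    rw [hk2] at hpow
    have := (hasDerivAt_pow (n - k + 1) u).mul hpow
    have hnk : n - k + 1 - 1 = n - k := by omega
    rw [hnk] at this
    exact this
  have hcont : Continuous (fun u : ℝ =>
      (((n - k + 1 : ℕ)) : ℝ) * u ^ (n - k) * ((1 - u * (1 - p)) / p) ^ (k - 1)
        + u ^ (n - k + 1) * (((k - 1 : ℕ) : ℝ) * ((1 - u * (1 - p)) / p) ^ (k - 2)
          * (-(1 - p) / p))) := by
    have hx : Continuous (fun u : ℝ => (1 - u * (1 - p)) / p) :=
      (continuous_const.sub (continuous_id.mul continuous_const)).div_const p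
    fun_prop
  have hFTC := intervalIntegral.integral_eq_sub_of_hasDerivAt hF (hcont.intervalIntegrable 0 1)
  -- evaluate boundary
  have hb : ((1:ℝ)) ^ (n - k + 1) * ((1 - 1 * (1 - p)) / p) ^ (k - 1)
      - ((0:ℝ)) ^ (n - k + 1) * ((1 - 0 * (1 - p)) / p) ^ (k - 1) = 1 := by
    rw [zero_pow (by omega), one_pow]
    have : (1 - 1 * (1 - p)) / p = 1 := by field_simp; ring
    rw [this, one_pow]
    ring
  rw [hb] at hFTC
  -- split the integral
  have hsplit : ∫ u in (0:ℝ)..1,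
      ((((n - k + 1 : ℕ)) : ℝ) * u ^ (n - k) * ((1 - u * (1 - p)) / p) ^ (k - 1)
        + u ^ (n - k + 1) * (((k - 1 : ℕ) : ℝ) * ((1 - u * (1 - p)) / p) ^ (k - 2)
          * (-(1 - p) / p)))
      = (((n - k + 1 : ℕ)) : ℝ) * konD k n p
        + (((k - 1 : ℕ) : ℝ) * (-(1 - p) / p))
          * ∫ u in (0:ℝ)..1, u ^ (n - k + 1) * ((1 - u * (1 - p)) / p) ^ (k - 2) := by
    have hx : Continuous (fun u : ℝ => (1 - u * (1 - p)) / p) :=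
      (continuous_const.sub (continuous_id.mul continuous_const)).div_const p
    rw [intervalIntegral.integral_add]
    · congr 1
      · rw [konD, ← intervalIntegral.integral_const_mul]
        apply intervalIntegral.integral_congr
        intro u _
        ring
      · rw [← intervalIntegral.integral_const_mul]
        apply intervalIntegral.integral_congr
        intro u _
        ring
    · exact ((continuous_const.mul (continuous_pow _)).mul (hx.pow _)).intervalIntegrable 0 1
    · exact ((continuous_pow _).mul ((continuous_const.mul (hx.pow _)).mul
        continuous_const)).intervalIntegrable 0 1
  -- the remaining integral equals konD - konN
  have hDN : ∫ u in (0:ℝ)..1, u ^ (n - k + 1) * ((1 - u * (1 - p)) / p) ^ (k - 2)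
      = konD k n p - konN k n p := by
    have hx : Continuous (fun u : ℝ => (1 - u * (1 - p)) / p) :=
      (continuous_const.sub (continuous_id.mul continuous_const)).div_const p
    rw [konD, konN, ← intervalIntegral.integral_sub]
    · apply intervalIntegral.integral_congr
      intro u _
      simp only
      have hxs : (1 - u * (1 - p)) / p = (1 - u) / p + u := by
        field_simp
        ring
      have hkk : k - 1 = (k - 2) + 1 := by omega
      rw [hkk, pow_succ, hxs]
      ring
    · exact ((continuous_pow _).mul (hx.pow _)).intervalIntegrable 0 1
    · exact (((continuous_pow _).mul (hx.pow _)).mul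
        ((continuous_const.sub continuous_id).div_const p)).intervalIntegrable 0 1
  rw [hsplit, hDN] at hFTC
  have hcast : (((n - k + 1 : ℕ)) : ℝ) = ((n - k : ℕ) : ℝ) + 1 := by push_cast; ring
  rw [hcast] at hFTC
  linear_combination hFTC








lemma one_sub_rel (k n : ℕ) (p : ℝ) : 1 - koonRel k n p = konA k n p / koonB k n := by
  have h : (∫ u in (0:ℝ)..p, u ^ (k-1) * (1-u) ^ (n-k)) + konA k n p = koonB k n := by
    rw [konA, koonB]
    exact integral_add_adjacent_intervals ((konA_cont k n).intervalIntegrable 0 p)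
      ((konA_cont k n).intervalIntegrable p 1)
  have hB : (0:ℝ) < koonB k n := koonB_pos
  rw [koonRel]
  field_simp
  linarith

lemma koonR_eq {k n : ℕ} {p : ℝ} (hp : p ∈ Ioo (0:ℝ) 1) :
    koonR k n p = p ^ (k - 1) * (1 - p) ^ (n - k + 1) / konA k n p := by
  have hA : 0 < konA k n p := konA_pos hp
  have hB : (0:ℝ) < koonB k n := koonB_pos
  rw [koonR, one_sub_rel]
  rw [pow_succ]
  field_simp

lemma koonR_hasDerivAt {k n : ℕ} (hk : 2 ≤ k) {p : ℝ} (hp : p ∈ Ioo (0:ℝ) 1) :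
    HasDerivAt (koonR k n)
      (((((k-1:ℕ):ℝ) * p ^ (k-2) * (1-p) ^ (n-k+1)
          - ((((n-k:ℕ):ℝ)+1)) * p ^ (k-1) * (1-p) ^ (n-k)) * konA k n p
        - p ^ (k-1) * (1-p) ^ (n-k+1) * (-(p ^ (k-1) * (1-p) ^ (n-k))))
        / (konA k n p) ^ 2) p := by
  have hA : 0 < konA k n p := konA_pos hp
  have h1 : HasDerivAt (fun x : ℝ => (1 - x)) (-1) p := by
    simpa using (hasDerivAt_id p).const_sub 1
  have h2 : HasDerivAt (fun x : ℝ => (1 - x) ^ (n - k + 1))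
      (((n-k+1:ℕ):ℝ) * (1-p) ^ (n-k) * (-1)) p := by
    have := h1.pow (n - k + 1)
    rwa [show n - k + 1 - 1 = n - k from by omega] at this
  have hG : HasDerivAt (fun x : ℝ => x ^ (k-1) * (1 - x) ^ (n-k+1))
      ((((k-1:ℕ):ℝ) * p ^ (k-2) * (1-p) ^ (n-k+1)
        - ((((n-k:ℕ):ℝ)+1)) * p ^ (k-1) * (1-p) ^ (n-k))) p := by
    have h3 := (hasDerivAt_pow (k-1) p).mul h2
    rw [show k - 1 - 1 = k - 2 from by omega] at h3
    refine h3.congr_deriv ?_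
    push_cast [show n - k + 1 = (n-k) + 1 from rfl]
    ring
  have hAd : HasDerivAt (fun x : ℝ => konA k n x) (-(p ^ (k-1) * (1-p) ^ (n-k))) p := by
    have := intervalIntegral.integral_hasDerivAt_left
      ((konA_cont k n).intervalIntegrable p 1)
      ((konA_cont k n).stronglyMeasurableAtFilter volume (nhds p))
      (konA_cont k n).continuousAt
    exact this
  have hdiv := hG.div hAd hA.ne'
  apply hdiv.congr_of_eventuallyEq
  filter_upwards [isOpen_Ioo.mem_nhds hp] with q hq
  exact koonR_eq hq

lemma alg_helper (p q T N K M a b : ℝ) (hp : 0 < p) (hq : 0 < q) (hT : 0 < T)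
    (ha : 0 < a) (hb : 0 < b)
    (hIBP : M * T - K * (q / p) * (T - N) = 1) :
    p * (((K * a * (b * q) - M * (a * p) * b) * (b * q * (a * p) * T)
        - (a * p) * (b * q) * (-((a * p) * b))) / (b * q * (a * p) * T) ^ 2)
      / ((a * p) * (b * q) / (b * q * (a * p) * T)) = K * (N / T) := by
  have h2 : K * q * (T - N) = p * (M * T - 1) := by
    field_simp at hIBP
    linarith
  field_simp
  linear_combination h2

theorem koonR_log_deriv_decreasing (k n : ℕ) (hk : 2 ≤ k) (hkn : k ≤ n)
    (R' : ℝ → ℝ) (hR' : ∀ p ∈ Set.Ioo (0 : ℝ) 1, HasDerivAt (koonR k n) (R' p) p) :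
    AntitoneOn (fun p => p * R' p / koonR k n p) (Set.Ioo (0 : ℝ) 1) ∧
      AntitoneOn (fun p =>
        (∫ u in (0:ℝ)..1, u ^ (n - k) * ((1 - u * (1 - p)) / p) ^ (k - 2)
            * ((1 - u) / p)) /
        (∫ u in (0:ℝ)..1, u ^ (n - k) * ((1 - u * (1 - p)) / p) ^ (k - 1)))
        (Set.Ioo (0 : ℝ) 1) := by
  have h2 : AntitoneOn (fun p => konN k n p / konD k n p) (Set.Ioo (0:ℝ) 1) :=
    konND_antitone k n hk
  constructor
  · -- part 1: equals (k-1) * (konN/konD) on Ioo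
    have heq : ∀ p ∈ Set.Ioo (0:ℝ) 1,
        p * R' p / koonR k n p = ((k - 1 : ℕ) : ℝ) * (konN k n p / konD k n p) := by
      intro p hp
      have hd := koonR_hasDerivAt (k := k) (n := n) hk hp
      have hRp : R' p = ((((k-1:ℕ):ℝ) * p ^ (k-2) * (1-p) ^ (n-k+1)
          - ((((n-k:ℕ):ℝ)+1)) * p ^ (k-1) * (1-p) ^ (n-k)) * konA k n p
        - p ^ (k-1) * (1-p) ^ (n-k+1) * (-(p ^ (k-1) * (1-p) ^ (n-k))))
        / (konA k n p) ^ 2 := (hR' p hp).unique hd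
      have hkr := koonR_eq (k := k) (n := n) hp
      have hAeq := konA_eq_konD (n := n) hk hp
      have hIBP := konIBP (n := n) hk hkn hp
      have hp1 : p ^ (k - 1) = p ^ (k - 2) * p := by
        rw [← pow_succ]; congr 1; omega
      have hq1 : (1 - p) ^ (n - k + 1) = (1 - p) ^ (n - k) * (1 - p) := by
        rw [← pow_succ]
      rw [hRp, hkr, hAeq, hp1, hq1]
      exact alg_helper p (1-p) (konD k n p) (konN k n p) ((k-1:ℕ):ℝ) (((n-k:ℕ):ℝ)+1)
        (p ^ (k-2)) ((1-p) ^ (n-k)) hp.1 (by linarith [hp.2]) (konD_pos p hp)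
        (pow_pos hp.1 _) (pow_pos (by linarith [hp.2] : (0:ℝ) < 1 - p) _) hIBP
    intro x hx y hy hxy
    simp only
    rw [heq x hx, heq y hy]
    exact mul_le_mul_of_nonneg_left (h2 hx hy hxy) (Nat.cast_nonneg _)
  · exact h2
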